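/- For any two unit vectors u, u′ ∈ ℝ⁷ there exists a linear isometry g of ℝ⁷ satisfying φ(g x, g y, g z) = φ(x, y, z) for all x, y, z ∈ ℝ⁷ and g u = u′. (The stabilizer G₂ of φ acts transitively on the unit sphere S⁶; its orbits on ℝ⁷ are the origin and the spheres centered at the origin.) -/

import Mathlib

noncomputable section

open scoped InnerProductSpace

/-- `3 × 3` determinant of coordinates `a, b, c` of `(x, y, z)`. -/
def det3 (a b c : Fin 7) (x y z : EuclideanSpace ℝ (Fin 7)) : ℝ :=
  x a * (y b * z c - y c * z b) - x b * (y a * z c - y c * z a) +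
    x c * (y a * z b - y b * z a)

/-- The associative calibration `φ` of Harvey–Lawson on `ℝ⁷`. -/
def phi (x y z : EuclideanSpace ℝ (Fin 7)) : ℝ :=
  det3 4 5 6 x y z - det3 4 0 1 x y z - det3 4 2 3 x y z -
    det3 5 0 2 x y z - det3 5 3 1 x y z - det3 6 0 3 x y z - det3 6 1 2 x y z

set_option maxHeartbeats 4000000

namespace G2Aux

abbrev E7 := EuclideanSpace ℝ (Fin 7)

/-- view a plain vector as an element of `E7` -/
def vec (v : Fin 7 → ℝ) : E7 := WithLp.toLp 2 v

theorem consmk0 {α : Type*} (a0 a1 a2 a3 a4 a5 a6 : α) (h : (0:ℕ) < 7) :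
    ![a0,a1,a2,a3,a4,a5,a6] ⟨0, h⟩ = a0 := rfl
theorem consmk1 {α : Type*} (a0 a1 a2 a3 a4 a5 a6 : α) (h : (1:ℕ) < 7) :
    ![a0,a1,a2,a3,a4,a5,a6] ⟨1, h⟩ = a1 := rfl
theorem consmk2 {α : Type*} (a0 a1 a2 a3 a4 a5 a6 : α) (h : (2:ℕ) < 7) :
    ![a0,a1,a2,a3,a4,a5,a6] ⟨2, h⟩ = a2 := rfl
theorem consmk3 {α : Type*} (a0 a1 a2 a3 a4 a5 a6 : α) (h : (3:ℕ) < 7) :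
    ![a0,a1,a2,a3,a4,a5,a6] ⟨3, h⟩ = a3 := rfl
theorem consmk4 {α : Type*} (a0 a1 a2 a3 a4 a5 a6 : α) (h : (4:ℕ) < 7) :
    ![a0,a1,a2,a3,a4,a5,a6] ⟨4, h⟩ = a4 := rfl
theorem consmk5 {α : Type*} (a0 a1 a2 a3 a4 a5 a6 : α) (h : (5:ℕ) < 7) :
    ![a0,a1,a2,a3,a4,a5,a6] ⟨5, h⟩ = a5 := rfl
theorem consmk6 {α : Type*} (a0 a1 a2 a3 a4 a5 a6 : α) (h : (6:ℕ) < 7) :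
    ![a0,a1,a2,a3,a4,a5,a6] ⟨6, h⟩ = a6 := rfl

theorem cons7_2 {α : Type*} (a0 a1 a2 a3 a4 a5 a6 : α) : ![a0,a1,a2,a3,a4,a5,a6] 2 = a2 := rfl
theorem cons7_3 {α : Type*} (a0 a1 a2 a3 a4 a5 a6 : α) : ![a0,a1,a2,a3,a4,a5,a6] 3 = a3 := rfl
theorem cons7_4 {α : Type*} (a0 a1 a2 a3 a4 a5 a6 : α) : ![a0,a1,a2,a3,a4,a5,a6] 4 = a4 := rfl
theorem cons7_5 {α : Type*} (a0 a1 a2 a3 a4 a5 a6 : α) : ![a0,a1,a2,a3,a4,a5,a6] 5 = a5 := rfl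
theorem cons7_6 {α : Type*} (a0 a1 a2 a3 a4 a5 a6 : α) : ![a0,a1,a2,a3,a4,a5,a6] 6 = a6 := rfl

def lmap (M : Fin 7 → Fin 7 → ℝ) : E7 →ₗ[ℝ] E7 where
  toFun x := WithLp.toLp 2 (fun i => ∑ j, M i j * x j)
  map_add' x y := by
    ext i
    simp [mul_add, Finset.sum_add_distrib]
  map_smul' c x := by
    ext i
    simp only [RingHom.id_apply, PiLp.smul_apply, smul_eq_mul, Finset.mul_sum]
    exact Finset.sum_congr rfl fun j _ => by ring

theorem lmap_apply (M : Fin 7 → Fin 7 → ℝ) (x : E7) (i : Fin 7) :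
    lmap M x i = ∑ j, M i j * x j := rfl

theorem inner_eq (x y : E7) : ⟪x, y⟫_ℝ = ∑ i, x i * y i := by
  simp [PiLp.inner_apply, RCLike.inner_apply]
  exact Finset.sum_congr rfl fun i _ => mul_comm _ _

def mkIso (M : Fin 7 → Fin 7 → ℝ)
    (h : ∀ x y : E7, ⟪lmap M x, lmap M y⟫_ℝ = ⟪x, y⟫_ℝ) : E7 ≃ₗᵢ[ℝ] E7 :=
  ((lmap M).isometryOfInner h).toLinearIsometryEquiv rfl

theorem mkIso_coord (M : Fin 7 → Fin 7 → ℝ) (h) (x : E7) (i : Fin 7) :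
    mkIso M h x i = ∑ j, M i j * x j := by
  rw [mkIso, LinearIsometry.toLinearIsometryEquiv_apply, LinearMap.coe_isometryOfInner]
  rfl
def MA (p0 p1 p2 p3 : ℝ) : Fin 7 → Fin 7 → ℝ :=
  ![![p0, p1, p2, p3, 0, 0, 0],
    ![-1*p1, p0, -1*p3, p2, 0, 0, 0],
    ![-1*p2, p3, p0, -1*p1, 0, 0, 0],
    ![-1*p3, -1*p2, p1, p0, 0, 0, 0],
    ![0, 0, 0, 0, (1:ℝ), 0, 0],
    ![0, 0, 0, 0, 0, (1:ℝ), 0],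
    ![0, 0, 0, 0, 0, 0, (1:ℝ)]]
theorem innerA (p0 p1 p2 p3 : ℝ) (hp : p0^2 + p1^2 + p2^2 + p3^2 = 1) (x y : E7) :
    ⟪lmap (MA p0 p1 p2 p3) x, lmap (MA p0 p1 p2 p3) y⟫_ℝ = ⟪x, y⟫_ℝ := by
  rw [inner_eq, inner_eq]
  simp only [MA, consmk0, consmk1, consmk2, consmk3, consmk4, consmk5, consmk6, vec, lmap_apply, Fin.sum_univ_seven, Matrix.cons_val_zero, Matrix.cons_val_one, Matrix.head_cons, cons7_2, cons7_3, cons7_4, cons7_5, cons7_6]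
  linear_combination ((x 0)*(y 0) + (x 1)*(y 1) + (x 2)*(y 2) + (x 3)*(y 3)) * hp
def gA (p0 p1 p2 p3 : ℝ) (hp : p0^2 + p1^2 + p2^2 + p3^2 = 1) : E7 ≃ₗᵢ[ℝ] E7 :=
  mkIso (MA p0 p1 p2 p3) (innerA p0 p1 p2 p3 hp)
theorem presA (p0 p1 p2 p3 : ℝ) (hp : p0^2 + p1^2 + p2^2 + p3^2 = 1) (x y z : E7) :
    phi (gA p0 p1 p2 p3 hp x) (gA p0 p1 p2 p3 hp y) (gA p0 p1 p2 p3 hp z) = phi x y z := by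
  simp only [gA, phi, det3, mkIso_coord, MA, consmk0, consmk1, consmk2, consmk3, consmk4, consmk5, consmk6, vec, lmap_apply, Fin.sum_univ_seven, Matrix.cons_val_zero, Matrix.cons_val_one, Matrix.head_cons, cons7_2, cons7_3, cons7_4, cons7_5, cons7_6]
  linear_combination (-1*(x 0)*(y 1)*(z 4) - 1*(x 0)*(y 2)*(z 5) - 1*(x 0)*(y 3)*(z 6) + (x 0)*(y 4)*(z 1) + (x 0)*(y 5)*(z 2) + (x 0)*(y 6)*(z 3) + (x 1)*(y 0)*(z 4) - 1*(x 1)*(y 2)*(z 6) + (x 1)*(y 3)*(z 5) - 1*(x 1)*(y 4)*(z 0) - 1*(x 1)*(y 5)*(z 3) + (x 1)*(y 6)*(z 2) + (x 2)*(y 0)*(z 5) + (x 2)*(y 1)*(z 6) - 1*(x 2)*(y 3)*(z 4) + (x 2)*(y 4)*(z 3) - 1*(x 2)*(y 5)*(z 0) - 1*(x 2)*(y 6)*(z 1) + (x 3)*(y 0)*(z 6) - 1*(x 3)*(y 1)*(z 5) + (x 3)*(y 2)*(z 4) - 1*(x 3)*(y 4)*(z 2) + (x 3)*(y 5)*(z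 1) - 1*(x 3)*(y 6)*(z 0) - 1*(x 4)*(y 0)*(z 1) + (x 4)*(y 1)*(z 0) - 1*(x 4)*(y 2)*(z 3) + (x 4)*(y 3)*(z 2) - 1*(x 5)*(y 0)*(z 2) + (x 5)*(y 1)*(z 3) + (x 5)*(y 2)*(z 0) - 1*(x 5)*(y 3)*(z 1) - 1*(x 6)*(y 0)*(z 3) - 1*(x 6)*(y 1)*(z 2) + (x 6)*(y 2)*(z 1) + (x 6)*(y 3)*(z 0)) * hp
def MB1 (h t : ℝ) : Fin 7 → Fin 7 → ℝ :=
  ![![h, 0, 0, -1*t, 0, 0, 0],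
    ![0, h, -1*t, 0, 0, 0, 0],
    ![0, t, h, 0, 0, 0, 0],
    ![t, 0, 0, h, 0, 0, 0],
    ![0, 0, 0, 0, h^2 - 1*t^2, (-2:ℝ)*h*t, 0],
    ![0, 0, 0, 0, (2:ℝ)*h*t, h^2 - 1*t^2, 0],
    ![0, 0, 0, 0, 0, 0, h^2 + t^2]]
theorem innerB1 (h t : ℝ) (hh : h^2 + t^2 = 1) (x y : E7) :
    ⟪lmap (MB1 h t) x, lmap (MB1 h t) y⟫_ℝ = ⟪x, y⟫_ℝ := by
  rw [inner_eq, inner_eq]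
  simp only [MB1, consmk0, consmk1, consmk2, consmk3, consmk4, consmk5, consmk6, vec, lmap_apply, Fin.sum_univ_seven, Matrix.cons_val_zero, Matrix.cons_val_one, Matrix.head_cons, cons7_2, cons7_3, cons7_4, cons7_5, cons7_6]
  linear_combination ((x 0)*(y 0) + (x 1)*(y 1) + (x 2)*(y 2) + (x 3)*(y 3) + (x 4)*(y 4) + (x 4)*(y 4)*h^2 + (x 4)*(y 4)*t^2 + (x 5)*(y 5) + (x 5)*(y 5)*h^2 + (x 5)*(y 5)*t^2 + (x 6)*(y 6) + (x 6)*(y 6)*h^2 + (x 6)*(y 6)*t^2) * hh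
def gB1 (h t : ℝ) (hh : h^2 + t^2 = 1) : E7 ≃ₗᵢ[ℝ] E7 :=
  mkIso (MB1 h t) (innerB1 h t hh)
theorem presB1 (h t : ℝ) (hh : h^2 + t^2 = 1) (x y z : E7) :
    phi (gB1 h t hh x) (gB1 h t hh y) (gB1 h t hh z) = phi x y z := by
  simp only [gB1, phi, det3, mkIso_coord, MB1, consmk0, consmk1, consmk2, consmk3, consmk4, consmk5, consmk6, vec, lmap_apply, Fin.sum_univ_seven, Matrix.cons_val_zero, Matrix.cons_val_one, Matrix.head_cons, cons7_2, cons7_3, cons7_4, cons7_5, cons7_6]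
  linear_combination (-1*(x 0)*(y 1)*(z 4) - 1*(x 0)*(y 1)*(z 4)*h^2 - 1*(x 0)*(y 1)*(z 4)*t^2 - 1*(x 0)*(y 2)*(z 5) - 1*(x 0)*(y 2)*(z 5)*h^2 - 1*(x 0)*(y 2)*(z 5)*t^2 - 1*(x 0)*(y 3)*(z 6) - 1*(x 0)*(y 3)*(z 6)*h^2 - 1*(x 0)*(y 3)*(z 6)*t^2 + (x 0)*(y 4)*(z 1) + (x 0)*(y 4)*(z 1)*h^2 + (x 0)*(y 4)*(z 1)*t^2 + (x 0)*(y 5)*(z 2) + (x 0)*(y 5)*(z 2)*h^2 + (x 0)*(y 5)*(z 2)*t^2 + (x 0)*(y 6)*(z 3) + (x 0)*(y 6)*(z 3)*h^2 + (x 0)*(y 6)*(z 3)*t^2 + (x 1)*(y 0)*(z 4) + (x 1)*(y 0)*(z 4)*h^2 + (x 1)*(y 0)*(z 4)*t^2 - 1*(x 1)*(y 2)*(z 6) - 1*(x 1)*(y 2)*(z 6)*h^2 - 1*(x 1)*(y 2)*(z 6)*t^2 + (x 1)*(y 3)*(z 5) + (x 1)*(y 3)*(z 5)*h^2 + (x 1)*(y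 3)*(z 5)*t^2 - 1*(x 1)*(y 4)*(z 0) - 1*(x 1)*(y 4)*(z 0)*h^2 - 1*(x 1)*(y 4)*(z 0)*t^2 - 1*(x 1)*(y 5)*(z 3) - 1*(x 1)*(y 5)*(z 3)*h^2 - 1*(x 1)*(y 5)*(z 3)*t^2 + (x 1)*(y 6)*(z 2) + (x 1)*(y 6)*(z 2)*h^2 + (x 1)*(y 6)*(z 2)*t^2 + (x 2)*(y 0)*(z 5) + (x 2)*(y 0)*(z 5)*h^2 + (x 2)*(y 0)*(z 5)*t^2 + (x 2)*(y 1)*(z 6) + (x 2)*(y 1)*(z 6)*h^2 + (x 2)*(y 1)*(z 6)*t^2 - 1*(x 2)*(y 3)*(z 4) - 1*(x 2)*(y 3)*(z 4)*h^2 - 1*(x 2)*(y 3)*(z 4)*t^2 + (x 2)*(y 4)*(z 3) + (x 2)*(y 4)*(z 3)*h^2 + (x 2)*(y 4)*(z 3)*t^2 - 1*(x 2)*(y 5)*(z 0) - 1*(x 2)*(y 5)*(z 0)*h^2 - 1*(x 2)*(y 5)*(z 0)*t^2 - 1*(x 2)*(y 6)*(z 1) - 1*(x 2)*(y 6)*(z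 1)*h^2 - 1*(x 2)*(y 6)*(z 1)*t^2 + (x 3)*(y 0)*(z 6) + (x 3)*(y 0)*(z 6)*h^2 + (x 3)*(y 0)*(z 6)*t^2 - 1*(x 3)*(y 1)*(z 5) - 1*(x 3)*(y 1)*(z 5)*h^2 - 1*(x 3)*(y 1)*(z 5)*t^2 + (x 3)*(y 2)*(z 4) + (x 3)*(y 2)*(z 4)*h^2 + (x 3)*(y 2)*(z 4)*t^2 - 1*(x 3)*(y 4)*(z 2) - 1*(x 3)*(y 4)*(z 2)*h^2 - 1*(x 3)*(y 4)*(z 2)*t^2 + (x 3)*(y 5)*(z 1) + (x 3)*(y 5)*(z 1)*h^2 + (x 3)*(y 5)*(z 1)*t^2 - 1*(x 3)*(y 6)*(z 0) - 1*(x 3)*(y 6)*(z 0)*h^2 - 1*(x 3)*(y 6)*(z 0)*t^2 - 1*(x 4)*(y 0)*(z 1) - 1*(x 4)*(y 0)*(z 1)*h^2 - 1*(x 4)*(y 0)*(z 1)*t^2 + (x 4)*(y 1)*(z 0) + (x 4)*(y 1)*(z 0)*h^2 + (x 4)*(y 1)*(z 0)*t^2 - 1*(x 4)*(y 2)*(z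 3) - 1*(x 4)*(y 2)*(z 3)*h^2 - 1*(x 4)*(y 2)*(z 3)*t^2 + (x 4)*(y 3)*(z 2) + (x 4)*(y 3)*(z 2)*h^2 + (x 4)*(y 3)*(z 2)*t^2 + (x 4)*(y 5)*(z 6) + (x 4)*(y 5)*(z 6)*h^2 + (2:ℝ)*(x 4)*(y 5)*(z 6)*h^2*t^2 + (x 4)*(y 5)*(z 6)*h^4 + (x 4)*(y 5)*(z 6)*t^2 + (x 4)*(y 5)*(z 6)*t^4 - 1*(x 4)*(y 6)*(z 5) - 1*(x 4)*(y 6)*(z 5)*h^2 + (-2:ℝ)*(x 4)*(y 6)*(z 5)*h^2*t^2 - 1*(x 4)*(y 6)*(z 5)*h^4 - 1*(x 4)*(y 6)*(z 5)*t^2 - 1*(x 4)*(y 6)*(z 5)*t^4 - 1*(x 5)*(y 0)*(z 2) - 1*(x 5)*(y 0)*(z 2)*h^2 - 1*(x 5)*(y 0)*(z 2)*t^2 + (x 5)*(y 1)*(z 3) + (x 5)*(y 1)*(z 3)*h^2 + (x 5)*(y 1)*(z 3)*t^2 + (x 5)*(y 2)*(z 0) + (x 5)*(y 2)*(z 0)*h^2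 + (x 5)*(y 2)*(z 0)*t^2 - 1*(x 5)*(y 3)*(z 1) - 1*(x 5)*(y 3)*(z 1)*h^2 - 1*(x 5)*(y 3)*(z 1)*t^2 - 1*(x 5)*(y 4)*(z 6) - 1*(x 5)*(y 4)*(z 6)*h^2 + (-2:ℝ)*(x 5)*(y 4)*(z 6)*h^2*t^2 - 1*(x 5)*(y 4)*(z 6)*h^4 - 1*(x 5)*(y 4)*(z 6)*t^2 - 1*(x 5)*(y 4)*(z 6)*t^4 + (x 5)*(y 6)*(z 4) + (x 5)*(y 6)*(z 4)*h^2 + (2:ℝ)*(x 5)*(y 6)*(z 4)*h^2*t^2 + (x 5)*(y 6)*(z 4)*h^4 + (x 5)*(y 6)*(z 4)*t^2 + (x 5)*(y 6)*(z 4)*t^4 - 1*(x 6)*(y 0)*(z 3) - 1*(x 6)*(y 0)*(z 3)*h^2 - 1*(x 6)*(y 0)*(z 3)*t^2 - 1*(x 6)*(y 1)*(z 2) - 1*(x 6)*(y 1)*(z 2)*h^2 - 1*(x 6)*(y 1)*(z 2)*t^2 + (x 6)*(y 2)*(z 1) + (x 6)*(y 2)*(z 1)*h^2 + (x 6)*(y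 2)*(z 1)*t^2 + (x 6)*(y 3)*(z 0) + (x 6)*(y 3)*(z 0)*h^2 + (x 6)*(y 3)*(z 0)*t^2 + (x 6)*(y 4)*(z 5) + (x 6)*(y 4)*(z 5)*h^2 + (2:ℝ)*(x 6)*(y 4)*(z 5)*h^2*t^2 + (x 6)*(y 4)*(z 5)*h^4 + (x 6)*(y 4)*(z 5)*t^2 + (x 6)*(y 4)*(z 5)*t^4 - 1*(x 6)*(y 5)*(z 4) - 1*(x 6)*(y 5)*(z 4)*h^2 + (-2:ℝ)*(x 6)*(y 5)*(z 4)*h^2*t^2 - 1*(x 6)*(y 5)*(z 4)*h^4 - 1*(x 6)*(y 5)*(z 4)*t^2 - 1*(x 6)*(y 5)*(z 4)*t^4) * hh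
def MB2 (h t : ℝ) : Fin 7 → Fin 7 → ℝ :=
  ![![h, 0, -1*t, 0, 0, 0, 0],
    ![0, h, 0, t, 0, 0, 0],
    ![t, 0, h, 0, 0, 0, 0],
    ![0, -1*t, 0, h, 0, 0, 0],
    ![0, 0, 0, 0, h^2 - 1*t^2, 0, (2:ℝ)*h*t],
    ![0, 0, 0, 0, 0, h^2 + t^2, 0],
    ![0, 0, 0, 0, (-2:ℝ)*h*t, 0, h^2 - 1*t^2]]
theorem innerB2 (h t : ℝ) (hh : h^2 + t^2 = 1) (x y : E7) :
    ⟪lmap (MB2 h t) x, lmap (MB2 h t) y⟫_ℝ = ⟪x, y⟫_ℝ := by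
  rw [inner_eq, inner_eq]
  simp only [MB2, consmk0, consmk1, consmk2, consmk3, consmk4, consmk5, consmk6, vec, lmap_apply, Fin.sum_univ_seven, Matrix.cons_val_zero, Matrix.cons_val_one, Matrix.head_cons, cons7_2, cons7_3, cons7_4, cons7_5, cons7_6]
  linear_combination ((x 0)*(y 0) + (x 1)*(y 1) + (x 2)*(y 2) + (x 3)*(y 3) + (x 4)*(y 4) + (x 4)*(y 4)*h^2 + (x 4)*(y 4)*t^2 + (x 5)*(y 5) + (x 5)*(y 5)*h^2 + (x 5)*(y 5)*t^2 + (x 6)*(y 6) + (x 6)*(y 6)*h^2 + (x 6)*(y 6)*t^2) * hh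
def gB2 (h t : ℝ) (hh : h^2 + t^2 = 1) : E7 ≃ₗᵢ[ℝ] E7 :=
  mkIso (MB2 h t) (innerB2 h t hh)
theorem presB2 (h t : ℝ) (hh : h^2 + t^2 = 1) (x y z : E7) :
    phi (gB2 h t hh x) (gB2 h t hh y) (gB2 h t hh z) = phi x y z := by
  simp only [gB2, phi, det3, mkIso_coord, MB2, consmk0, consmk1, consmk2, consmk3, consmk4, consmk5, consmk6, vec, lmap_apply, Fin.sum_univ_seven, Matrix.cons_val_zero, Matrix.cons_val_one, Matrix.head_cons, cons7_2, cons7_3, cons7_4, cons7_5, cons7_6]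
  linear_combination (-1*(x 0)*(y 1)*(z 4) - 1*(x 0)*(y 1)*(z 4)*h^2 - 1*(x 0)*(y 1)*(z 4)*t^2 - 1*(x 0)*(y 2)*(z 5) - 1*(x 0)*(y 2)*(z 5)*h^2 - 1*(x 0)*(y 2)*(z 5)*t^2 - 1*(x 0)*(y 3)*(z 6) - 1*(x 0)*(y 3)*(z 6)*h^2 - 1*(x 0)*(y 3)*(z 6)*t^2 + (x 0)*(y 4)*(z 1) + (x 0)*(y 4)*(z 1)*h^2 + (x 0)*(y 4)*(z 1)*t^2 + (x 0)*(y 5)*(z 2) + (x 0)*(y 5)*(z 2)*h^2 + (x 0)*(y 5)*(z 2)*t^2 + (x 0)*(y 6)*(z 3) + (x 0)*(y 6)*(z 3)*h^2 + (x 0)*(y 6)*(z 3)*t^2 + (x 1)*(y 0)*(z 4) + (x 1)*(y 0)*(z 4)*h^2 + (x 1)*(y 0)*(z 4)*t^2 - 1*(x 1)*(y 2)*(z 6) - 1*(x 1)*(y 2)*(z 6)*h^2 - 1*(x 1)*(y 2)*(z 6)*t^2 + (x 1)*(y 3)*(z 5) + (x 1)*(y 3)*(z 5)*h^2 + (x 1)*(y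 3)*(z 5)*t^2 - 1*(x 1)*(y 4)*(z 0) - 1*(x 1)*(y 4)*(z 0)*h^2 - 1*(x 1)*(y 4)*(z 0)*t^2 - 1*(x 1)*(y 5)*(z 3) - 1*(x 1)*(y 5)*(z 3)*h^2 - 1*(x 1)*(y 5)*(z 3)*t^2 + (x 1)*(y 6)*(z 2) + (x 1)*(y 6)*(z 2)*h^2 + (x 1)*(y 6)*(z 2)*t^2 + (x 2)*(y 0)*(z 5) + (x 2)*(y 0)*(z 5)*h^2 + (x 2)*(y 0)*(z 5)*t^2 + (x 2)*(y 1)*(z 6) + (x 2)*(y 1)*(z 6)*h^2 + (x 2)*(y 1)*(z 6)*t^2 - 1*(x 2)*(y 3)*(z 4) - 1*(x 2)*(y 3)*(z 4)*h^2 - 1*(x 2)*(y 3)*(z 4)*t^2 + (x 2)*(y 4)*(z 3) + (x 2)*(y 4)*(z 3)*h^2 + (x 2)*(y 4)*(z 3)*t^2 - 1*(x 2)*(y 5)*(z 0) - 1*(x 2)*(y 5)*(z 0)*h^2 - 1*(x 2)*(y 5)*(z 0)*t^2 - 1*(x 2)*(y 6)*(z 1) - 1*(x 2)*(y 6)*(z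 1)*h^2 - 1*(x 2)*(y 6)*(z 1)*t^2 + (x 3)*(y 0)*(z 6) + (x 3)*(y 0)*(z 6)*h^2 + (x 3)*(y 0)*(z 6)*t^2 - 1*(x 3)*(y 1)*(z 5) - 1*(x 3)*(y 1)*(z 5)*h^2 - 1*(x 3)*(y 1)*(z 5)*t^2 + (x 3)*(y 2)*(z 4) + (x 3)*(y 2)*(z 4)*h^2 + (x 3)*(y 2)*(z 4)*t^2 - 1*(x 3)*(y 4)*(z 2) - 1*(x 3)*(y 4)*(z 2)*h^2 - 1*(x 3)*(y 4)*(z 2)*t^2 + (x 3)*(y 5)*(z 1) + (x 3)*(y 5)*(z 1)*h^2 + (x 3)*(y 5)*(z 1)*t^2 - 1*(x 3)*(y 6)*(z 0) - 1*(x 3)*(y 6)*(z 0)*h^2 - 1*(x 3)*(y 6)*(z 0)*t^2 - 1*(x 4)*(y 0)*(z 1) - 1*(x 4)*(y 0)*(z 1)*h^2 - 1*(x 4)*(y 0)*(z 1)*t^2 + (x 4)*(y 1)*(z 0) + (x 4)*(y 1)*(z 0)*h^2 + (x 4)*(y 1)*(z 0)*t^2 - 1*(x 4)*(y 2)*(z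 3) - 1*(x 4)*(y 2)*(z 3)*h^2 - 1*(x 4)*(y 2)*(z 3)*t^2 + (x 4)*(y 3)*(z 2) + (x 4)*(y 3)*(z 2)*h^2 + (x 4)*(y 3)*(z 2)*t^2 + (x 4)*(y 5)*(z 6) + (x 4)*(y 5)*(z 6)*h^2 + (2:ℝ)*(x 4)*(y 5)*(z 6)*h^2*t^2 + (x 4)*(y 5)*(z 6)*h^4 + (x 4)*(y 5)*(z 6)*t^2 + (x 4)*(y 5)*(z 6)*t^4 - 1*(x 4)*(y 6)*(z 5) - 1*(x 4)*(y 6)*(z 5)*h^2 + (-2:ℝ)*(x 4)*(y 6)*(z 5)*h^2*t^2 - 1*(x 4)*(y 6)*(z 5)*h^4 - 1*(x 4)*(y 6)*(z 5)*t^2 - 1*(x 4)*(y 6)*(z 5)*t^4 - 1*(x 5)*(y 0)*(z 2) - 1*(x 5)*(y 0)*(z 2)*h^2 - 1*(x 5)*(y 0)*(z 2)*t^2 + (x 5)*(y 1)*(z 3) + (x 5)*(y 1)*(z 3)*h^2 + (x 5)*(y 1)*(z 3)*t^2 + (x 5)*(y 2)*(z 0) + (x 5)*(y 2)*(z 0)*h^2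 + (x 5)*(y 2)*(z 0)*t^2 - 1*(x 5)*(y 3)*(z 1) - 1*(x 5)*(y 3)*(z 1)*h^2 - 1*(x 5)*(y 3)*(z 1)*t^2 - 1*(x 5)*(y 4)*(z 6) - 1*(x 5)*(y 4)*(z 6)*h^2 + (-2:ℝ)*(x 5)*(y 4)*(z 6)*h^2*t^2 - 1*(x 5)*(y 4)*(z 6)*h^4 - 1*(x 5)*(y 4)*(z 6)*t^2 - 1*(x 5)*(y 4)*(z 6)*t^4 + (x 5)*(y 6)*(z 4) + (x 5)*(y 6)*(z 4)*h^2 + (2:ℝ)*(x 5)*(y 6)*(z 4)*h^2*t^2 + (x 5)*(y 6)*(z 4)*h^4 + (x 5)*(y 6)*(z 4)*t^2 + (x 5)*(y 6)*(z 4)*t^4 - 1*(x 6)*(y 0)*(z 3) - 1*(x 6)*(y 0)*(z 3)*h^2 - 1*(x 6)*(y 0)*(z 3)*t^2 - 1*(x 6)*(y 1)*(z 2) - 1*(x 6)*(y 1)*(z 2)*h^2 - 1*(x 6)*(y 1)*(z 2)*t^2 + (x 6)*(y 2)*(z 1) + (x 6)*(y 2)*(z 1)*h^2 + (x 6)*(y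 2)*(z 1)*t^2 + (x 6)*(y 3)*(z 0) + (x 6)*(y 3)*(z 0)*h^2 + (x 6)*(y 3)*(z 0)*t^2 + (x 6)*(y 4)*(z 5) + (x 6)*(y 4)*(z 5)*h^2 + (2:ℝ)*(x 6)*(y 4)*(z 5)*h^2*t^2 + (x 6)*(y 4)*(z 5)*h^4 + (x 6)*(y 4)*(z 5)*t^2 + (x 6)*(y 4)*(z 5)*t^4 - 1*(x 6)*(y 5)*(z 4) - 1*(x 6)*(y 5)*(z 4)*h^2 + (-2:ℝ)*(x 6)*(y 5)*(z 4)*h^2*t^2 - 1*(x 6)*(y 5)*(z 4)*h^4 - 1*(x 6)*(y 5)*(z 4)*t^2 - 1*(x 6)*(y 5)*(z 4)*t^4) * hh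
def MB3 (h t : ℝ) : Fin 7 → Fin 7 → ℝ :=
  ![![h^2 - 1*t^2, 0, 0, 0, (2:ℝ)*h*t, 0, 0],
    ![0, h^2 + t^2, 0, 0, 0, 0, 0],
    ![0, 0, h, 0, 0, 0, t],
    ![0, 0, 0, h, 0, -1*t, 0],
    ![(-2:ℝ)*h*t, 0, 0, 0, h^2 - 1*t^2, 0, 0],
    ![0, 0, 0, t, 0, h, 0],
    ![0, 0, -1*t, 0, 0, 0, h]]
theorem innerB3 (h t : ℝ) (hh : h^2 + t^2 = 1) (x y : E7) :
    ⟪lmap (MB3 h t) x, lmap (MB3 h t) y⟫_ℝ = ⟪x, y⟫_ℝ := by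
  rw [inner_eq, inner_eq]
  simp only [MB3, consmk0, consmk1, consmk2, consmk3, consmk4, consmk5, consmk6, vec, lmap_apply, Fin.sum_univ_seven, Matrix.cons_val_zero, Matrix.cons_val_one, Matrix.head_cons, cons7_2, cons7_3, cons7_4, cons7_5, cons7_6]
  linear_combination ((x 0)*(y 0) + (x 0)*(y 0)*h^2 + (x 0)*(y 0)*t^2 + (x 1)*(y 1) + (x 1)*(y 1)*h^2 + (x 1)*(y 1)*t^2 + (x 2)*(y 2) + (x 3)*(y 3) + (x 4)*(y 4) + (x 4)*(y 4)*h^2 + (x 4)*(y 4)*t^2 + (x 5)*(y 5) + (x 6)*(y 6)) * hh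
def gB3 (h t : ℝ) (hh : h^2 + t^2 = 1) : E7 ≃ₗᵢ[ℝ] E7 :=
  mkIso (MB3 h t) (innerB3 h t hh)
theorem presB3 (h t : ℝ) (hh : h^2 + t^2 = 1) (x y z : E7) :
    phi (gB3 h t hh x) (gB3 h t hh y) (gB3 h t hh z) = phi x y z := by
  simp only [gB3, phi, det3, mkIso_coord, MB3, consmk0, consmk1, consmk2, consmk3, consmk4, consmk5, consmk6, vec, lmap_apply, Fin.sum_univ_seven, Matrix.cons_val_zero, Matrix.cons_val_one, Matrix.head_cons, cons7_2, cons7_3, cons7_4, cons7_5, cons7_6]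
  linear_combination (-1*(x 0)*(y 1)*(z 4) - 1*(x 0)*(y 1)*(z 4)*h^2 + (-2:ℝ)*(x 0)*(y 1)*(z 4)*h^2*t^2 - 1*(x 0)*(y 1)*(z 4)*h^4 - 1*(x 0)*(y 1)*(z 4)*t^2 - 1*(x 0)*(y 1)*(z 4)*t^4 - 1*(x 0)*(y 2)*(z 5) - 1*(x 0)*(y 2)*(z 5)*h^2 - 1*(x 0)*(y 2)*(z 5)*t^2 - 1*(x 0)*(y 3)*(z 6) - 1*(x 0)*(y 3)*(z 6)*h^2 - 1*(x 0)*(y 3)*(z 6)*t^2 + (x 0)*(y 4)*(z 1) + (x 0)*(y 4)*(z 1)*h^2 + (2:ℝ)*(x 0)*(y 4)*(z 1)*h^2*t^2 + (x 0)*(y 4)*(z 1)*h^4 + (x 0)*(y 4)*(z 1)*t^2 + (x 0)*(y 4)*(z 1)*t^4 + (x 0)*(y 5)*(z 2) + (x 0)*(y 5)*(z 2)*h^2 + (x 0)*(y 5)*(z 2)*t^2 + (x 0)*(y 6)*(z 3) + (x 0)*(y 6)*(z 3)*h^2 + (x 0)*(y 6)*(z 3)*t^2 + (x 1)*(y 0)*(z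 4) + (x 1)*(y 0)*(z 4)*h^2 + (2:ℝ)*(x 1)*(y 0)*(z 4)*h^2*t^2 + (x 1)*(y 0)*(z 4)*h^4 + (x 1)*(y 0)*(z 4)*t^2 + (x 1)*(y 0)*(z 4)*t^4 - 1*(x 1)*(y 2)*(z 6) - 1*(x 1)*(y 2)*(z 6)*h^2 - 1*(x 1)*(y 2)*(z 6)*t^2 + (x 1)*(y 3)*(z 5) + (x 1)*(y 3)*(z 5)*h^2 + (x 1)*(y 3)*(z 5)*t^2 - 1*(x 1)*(y 4)*(z 0) - 1*(x 1)*(y 4)*(z 0)*h^2 + (-2:ℝ)*(x 1)*(y 4)*(z 0)*h^2*t^2 - 1*(x 1)*(y 4)*(z 0)*h^4 - 1*(x 1)*(y 4)*(z 0)*t^2 - 1*(x 1)*(y 4)*(z 0)*t^4 - 1*(x 1)*(y 5)*(z 3) - 1*(x 1)*(y 5)*(z 3)*h^2 - 1*(x 1)*(y 5)*(z 3)*t^2 + (x 1)*(y 6)*(z 2) + (x 1)*(y 6)*(z 2)*h^2 + (x 1)*(y 6)*(z 2)*t^2 + (x 2)*(y 0)*(z 5) + (x 2)*(y 0)*(z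 5)*h^2 + (x 2)*(y 0)*(z 5)*t^2 + (x 2)*(y 1)*(z 6) + (x 2)*(y 1)*(z 6)*h^2 + (x 2)*(y 1)*(z 6)*t^2 - 1*(x 2)*(y 3)*(z 4) - 1*(x 2)*(y 3)*(z 4)*h^2 - 1*(x 2)*(y 3)*(z 4)*t^2 + (x 2)*(y 4)*(z 3) + (x 2)*(y 4)*(z 3)*h^2 + (x 2)*(y 4)*(z 3)*t^2 - 1*(x 2)*(y 5)*(z 0) - 1*(x 2)*(y 5)*(z 0)*h^2 - 1*(x 2)*(y 5)*(z 0)*t^2 - 1*(x 2)*(y 6)*(z 1) - 1*(x 2)*(y 6)*(z 1)*h^2 - 1*(x 2)*(y 6)*(z 1)*t^2 + (x 3)*(y 0)*(z 6) + (x 3)*(y 0)*(z 6)*h^2 + (x 3)*(y 0)*(z 6)*t^2 - 1*(x 3)*(y 1)*(z 5) - 1*(x 3)*(y 1)*(z 5)*h^2 - 1*(x 3)*(y 1)*(z 5)*t^2 + (x 3)*(y 2)*(z 4) + (x 3)*(y 2)*(z 4)*h^2 + (x 3)*(y 2)*(z 4)*t^2 - 1*(x 3)*(y 4)*(z 2)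 - 1*(x 3)*(y 4)*(z 2)*h^2 - 1*(x 3)*(y 4)*(z 2)*t^2 + (x 3)*(y 5)*(z 1) + (x 3)*(y 5)*(z 1)*h^2 + (x 3)*(y 5)*(z 1)*t^2 - 1*(x 3)*(y 6)*(z 0) - 1*(x 3)*(y 6)*(z 0)*h^2 - 1*(x 3)*(y 6)*(z 0)*t^2 - 1*(x 4)*(y 0)*(z 1) - 1*(x 4)*(y 0)*(z 1)*h^2 + (-2:ℝ)*(x 4)*(y 0)*(z 1)*h^2*t^2 - 1*(x 4)*(y 0)*(z 1)*h^4 - 1*(x 4)*(y 0)*(z 1)*t^2 - 1*(x 4)*(y 0)*(z 1)*t^4 + (x 4)*(y 1)*(z 0) + (x 4)*(y 1)*(z 0)*h^2 + (2:ℝ)*(x 4)*(y 1)*(z 0)*h^2*t^2 + (x 4)*(y 1)*(z 0)*h^4 + (x 4)*(y 1)*(z 0)*t^2 + (x 4)*(y 1)*(z 0)*t^4 - 1*(x 4)*(y 2)*(z 3) - 1*(x 4)*(y 2)*(z 3)*h^2 - 1*(x 4)*(y 2)*(z 3)*t^2 + (x 4)*(y 3)*(z 2) + (x 4)*(y 3)*(z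 2)*h^2 + (x 4)*(y 3)*(z 2)*t^2 + (x 4)*(y 5)*(z 6) + (x 4)*(y 5)*(z 6)*h^2 + (x 4)*(y 5)*(z 6)*t^2 - 1*(x 4)*(y 6)*(z 5) - 1*(x 4)*(y 6)*(z 5)*h^2 - 1*(x 4)*(y 6)*(z 5)*t^2 - 1*(x 5)*(y 0)*(z 2) - 1*(x 5)*(y 0)*(z 2)*h^2 - 1*(x 5)*(y 0)*(z 2)*t^2 + (x 5)*(y 1)*(z 3) + (x 5)*(y 1)*(z 3)*h^2 + (x 5)*(y 1)*(z 3)*t^2 + (x 5)*(y 2)*(z 0) + (x 5)*(y 2)*(z 0)*h^2 + (x 5)*(y 2)*(z 0)*t^2 - 1*(x 5)*(y 3)*(z 1) - 1*(x 5)*(y 3)*(z 1)*h^2 - 1*(x 5)*(y 3)*(z 1)*t^2 - 1*(x 5)*(y 4)*(z 6) - 1*(x 5)*(y 4)*(z 6)*h^2 - 1*(x 5)*(y 4)*(z 6)*t^2 + (x 5)*(y 6)*(z 4) + (x 5)*(y 6)*(z 4)*h^2 + (x 5)*(y 6)*(z 4)*t^2 - 1*(x 6)*(y 0)*(z 3)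 - 1*(x 6)*(y 0)*(z 3)*h^2 - 1*(x 6)*(y 0)*(z 3)*t^2 - 1*(x 6)*(y 1)*(z 2) - 1*(x 6)*(y 1)*(z 2)*h^2 - 1*(x 6)*(y 1)*(z 2)*t^2 + (x 6)*(y 2)*(z 1) + (x 6)*(y 2)*(z 1)*h^2 + (x 6)*(y 2)*(z 1)*t^2 + (x 6)*(y 3)*(z 0) + (x 6)*(y 3)*(z 0)*h^2 + (x 6)*(y 3)*(z 0)*t^2 + (x 6)*(y 4)*(z 5) + (x 6)*(y 4)*(z 5)*h^2 + (x 6)*(y 4)*(z 5)*t^2 - 1*(x 6)*(y 5)*(z 4) - 1*(x 6)*(y 5)*(z 4)*h^2 - 1*(x 6)*(y 5)*(z 4)*t^2) * hh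

theorem polar2 (a b : ℝ) : ∃ r c s : ℝ, c^2 + s^2 = 1 ∧ a = r*c ∧ b = r*s ∧ r^2 = a^2 + b^2 := by
  rcases eq_or_ne (a^2 + b^2) 0 with h | h
  · exact ⟨0, 1, 0, by norm_num, by nlinarith [sq_nonneg a, sq_nonneg b],
      by nlinarith [sq_nonneg a, sq_nonneg b], by rw [h]; ring⟩
  · have hnn : (0:ℝ) ≤ a^2 + b^2 := by positivity
    have hs2 : Real.sqrt (a^2 + b^2) ^ 2 = a^2 + b^2 := Real.sq_sqrt hnn
    have hs0 : Real.sqrt (a^2 + b^2) ≠ 0 := by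
      intro h0
      rw [h0] at hs2
      exact h (by linarith)
    refine ⟨Real.sqrt (a^2 + b^2), a / Real.sqrt (a^2 + b^2), b / Real.sqrt (a^2 + b^2), ?_,
      by field_simp, by field_simp, hs2⟩
    first
    | (field_simp; linear_combination hs2)
    | (field_simp; linear_combination -hs2)
    | field_simp

theorem polar4 (a b c d : ℝ) : ∃ s p0 p1 p2 p3 : ℝ, p0^2 + p1^2 + p2^2 + p3^2 = 1 ∧
    a = s*p0 ∧ b = s*p1 ∧ c = s*p2 ∧ d = s*p3 ∧ s^2 = a^2 + b^2 + c^2 + d^2 := by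
  rcases eq_or_ne (a^2 + b^2 + c^2 + d^2) 0 with h | h
  · refine ⟨0, 1, 0, 0, 0, by norm_num, ?_, ?_, ?_, ?_, by rw [h]; ring⟩ <;>
      nlinarith [sq_nonneg a, sq_nonneg b, sq_nonneg c, sq_nonneg d]
  · have hnn : (0:ℝ) ≤ a^2 + b^2 + c^2 + d^2 := by positivity
    have hs2 : Real.sqrt (a^2 + b^2 + c^2 + d^2) ^ 2 = a^2 + b^2 + c^2 + d^2 := Real.sq_sqrt hnn
    have hs0 : Real.sqrt (a^2 + b^2 + c^2 + d^2) ≠ 0 := by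
      intro h0
      rw [h0] at hs2
      exact h (by linarith)
    refine ⟨Real.sqrt (a^2 + b^2 + c^2 + d^2), a / Real.sqrt (a^2 + b^2 + c^2 + d^2),
      b / Real.sqrt (a^2 + b^2 + c^2 + d^2), c / Real.sqrt (a^2 + b^2 + c^2 + d^2),
      d / Real.sqrt (a^2 + b^2 + c^2 + d^2), ?_,
      by field_simp, by field_simp, by field_simp, by field_simp, hs2⟩
    first
    | (field_simp; linear_combination hs2)
    | (field_simp; linear_combination -hs2)
    | field_simp

theorem half2 (c s : ℝ) (h : c^2 + s^2 = 1) :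
    ∃ x y : ℝ, x^2 + y^2 = 1 ∧ c = x^2 - y^2 ∧ s = 2*x*y := by
  have hc1 : c^2 ≤ 1 := by nlinarith [sq_nonneg s]
  have h1 : (0:ℝ) ≤ (1+c)/2 := by nlinarith
  have h2 : (0:ℝ) ≤ (1-c)/2 := by nlinarith
  have hx : Real.sqrt ((1+c)/2) ^ 2 = (1+c)/2 := Real.sq_sqrt h1
  have hy : Real.sqrt ((1-c)/2) ^ 2 = (1-c)/2 := Real.sq_sqrt h2
  rcases le_or_gt 0 s with hs | hs
  · have key : (1+c)/2 * ((1-c)/2) = (s/2)^2 := by linear_combination (-1/4 : ℝ) * h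
    have hxy : Real.sqrt ((1+c)/2) * Real.sqrt ((1-c)/2) = s/2 := by
      rw [← Real.sqrt_mul h1, key, Real.sqrt_sq (by linarith)]
    exact ⟨Real.sqrt ((1+c)/2), Real.sqrt ((1-c)/2), by linarith, by linarith, by linarith⟩
  · have key : (1+c)/2 * ((1-c)/2) = (-s/2)^2 := by linear_combination (-1/4 : ℝ) * h
    have hxy : Real.sqrt ((1+c)/2) * Real.sqrt ((1-c)/2) = -s/2 := by
      rw [← Real.sqrt_mul h1, key, Real.sqrt_sq (by linarith)]
    refine ⟨Real.sqrt ((1+c)/2), -Real.sqrt ((1-c)/2), by linarith, by linarith, by linarith⟩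

theorem premain (u : E7) (hu : ‖u‖ = 1) :
    ∃ g : E7 ≃ₗᵢ[ℝ] E7, (∀ x y z, phi (g x) (g y) (g z) = phi x y z) ∧
      g u = vec ![0, 0, 0, 0, 1, 0, 0] := by
  have hinner : ⟪u, u⟫_ℝ = 1 := by
    rw [real_inner_self_eq_norm_mul_norm, hu]
    norm_num
  rw [inner_eq, Fin.sum_univ_seven] at hinner
  obtain ⟨s, p0, p1, p2, p3, hp, hu0, hu1, hu2, hu3, hs⟩ := polar4 (u 0) (u 1) (u 2) (u 3)
  obtain ⟨r, c1, s1, hcs1, hu4, hu5, hr⟩ := polar2 (u 4) (u 5)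
  obtain ⟨h1, t1, hh1, hc1, hs1⟩ := half2 c1 s1 hcs1
  obtain ⟨R, c2, s2, hcs2, hr2, hu6, hR⟩ := polar2 r (u 6)
  obtain ⟨h2, t2, hh2, hc2, hs2⟩ := half2 c2 s2 hcs2
  have hsR : R^2 + s^2 = 1 := by linear_combination hR + hr + hs + hinner
  obtain ⟨h3, t3, hh3, hR3, hs3⟩ := half2 R s hsR
  have hh1' : h1^2 + (-t1)^2 = 1 := by linear_combination hh1
  have hh1'' : h1^2 + 0^2 + 0^2 + (-t1)^2 = 1 := by linear_combination hh1
  have hh2'' : h2^2 + 0^2 + t2^2 + 0^2 = 1 := by linear_combination hh2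
  have hh3' : h3^2 + (-t3)^2 = 1 := by linear_combination hh3
  refine ⟨(((((gA p0 p1 p2 p3 hp).trans (gB1 h1 (-t1) hh1')).trans
      (gA h1 0 0 (-t1) hh1'')).trans (gB2 h2 t2 hh2)).trans
      (gA h2 0 t2 0 hh2'')).trans (gB3 h3 (-t3) hh3'), ?_, ?_⟩
  · intro x y z
    simp only [LinearIsometryEquiv.trans_apply]
    rw [presB3, presA, presB2, presA, presB1, presA]
  · simp only [LinearIsometryEquiv.trans_apply]
    have e1 : gA p0 p1 p2 p3 hp (u) = vec ![s, 0, 0, 0, (u 4), (u 5), (u 6)] := by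
      ext i
      fin_cases i
      · simp only [gA, mkIso_coord, MA, consmk0, consmk1, consmk2, consmk3, consmk4, consmk5, consmk6, vec, lmap_apply, Fin.sum_univ_seven, Matrix.cons_val_zero, Matrix.cons_val_one, Matrix.head_cons, cons7_2, cons7_3, cons7_4, cons7_5, cons7_6]
        linear_combination (p0) * hu0 + (p1) * hu1 + (p2) * hu2 + (p3) * hu3 + (s) * hp
      · simp only [gA, mkIso_coord, MA, consmk0, consmk1, consmk2, consmk3, consmk4, consmk5, consmk6, vec, lmap_apply, Fin.sum_univ_seven, Matrix.cons_val_zero, Matrix.cons_val_one, Matrix.head_cons, cons7_2, cons7_3, cons7_4, cons7_5, cons7_6]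
        linear_combination (-1*p1) * hu0 + (p0) * hu1 + (-1*p3) * hu2 + (p2) * hu3
      · simp only [gA, mkIso_coord, MA, consmk0, consmk1, consmk2, consmk3, consmk4, consmk5, consmk6, vec, lmap_apply, Fin.sum_univ_seven, Matrix.cons_val_zero, Matrix.cons_val_one, Matrix.head_cons, cons7_2, cons7_3, cons7_4, cons7_5, cons7_6]
        linear_combination (-1*p2) * hu0 + (p3) * hu1 + (p0) * hu2 + (-1*p1) * hu3
      · simp only [gA, mkIso_coord, MA, consmk0, consmk1, consmk2, consmk3, consmk4, consmk5, consmk6, vec, lmap_apply, Fin.sum_univ_seven, Matrix.cons_val_zero, Matrix.cons_val_one, Matrix.head_cons, cons7_2, cons7_3, cons7_4, cons7_5, cons7_6]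
        linear_combination (-1*p3) * hu0 + (-1*p2) * hu1 + (p1) * hu2 + (p0) * hu3
      · simp only [gA, mkIso_coord, MA, consmk0, consmk1, consmk2, consmk3, consmk4, consmk5, consmk6, vec, lmap_apply, Fin.sum_univ_seven, Matrix.cons_val_zero, Matrix.cons_val_one, Matrix.head_cons, cons7_2, cons7_3, cons7_4, cons7_5, cons7_6]
        ring
      · simp only [gA, mkIso_coord, MA, consmk0, consmk1, consmk2, consmk3, consmk4, consmk5, consmk6, vec, lmap_apply, Fin.sum_univ_seven, Matrix.cons_val_zero, Matrix.cons_val_one, Matrix.head_cons, cons7_2, cons7_3, cons7_4, cons7_5, cons7_6]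
        ring
      · simp only [gA, mkIso_coord, MA, consmk0, consmk1, consmk2, consmk3, consmk4, consmk5, consmk6, vec, lmap_apply, Fin.sum_univ_seven, Matrix.cons_val_zero, Matrix.cons_val_one, Matrix.head_cons, cons7_2, cons7_3, cons7_4, cons7_5, cons7_6]
        ring
    have e2 : gB1 h1 (-t1) hh1' (vec ![s, 0, 0, 0, (u 4), (u 5), (u 6)]) = vec ![h1*s, 0, 0, -1*s*t1, r, 0, (u 6)] := by
      ext i
      fin_cases i
      · simp only [gB1, mkIso_coord, MB1, consmk0, consmk1, consmk2, consmk3, consmk4, consmk5, consmk6, vec, lmap_apply, Fin.sum_univ_seven, Matrix.cons_val_zero, Matrix.cons_val_one, Matrix.head_cons, cons7_2, cons7_3, cons7_4, cons7_5, cons7_6]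
        ring
      · simp only [gB1, mkIso_coord, MB1, consmk0, consmk1, consmk2, consmk3, consmk4, consmk5, consmk6, vec, lmap_apply, Fin.sum_univ_seven, Matrix.cons_val_zero, Matrix.cons_val_one, Matrix.head_cons, cons7_2, cons7_3, cons7_4, cons7_5, cons7_6]
        ring
      · simp only [gB1, mkIso_coord, MB1, consmk0, consmk1, consmk2, consmk3, consmk4, consmk5, consmk6, vec, lmap_apply, Fin.sum_univ_seven, Matrix.cons_val_zero, Matrix.cons_val_one, Matrix.head_cons, cons7_2, cons7_3, cons7_4, cons7_5, cons7_6]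
        ring
      · simp only [gB1, mkIso_coord, MB1, consmk0, consmk1, consmk2, consmk3, consmk4, consmk5, consmk6, vec, lmap_apply, Fin.sum_univ_seven, Matrix.cons_val_zero, Matrix.cons_val_one, Matrix.head_cons, cons7_2, cons7_3, cons7_4, cons7_5, cons7_6]
        ring
      · simp only [gB1, mkIso_coord, MB1, consmk0, consmk1, consmk2, consmk3, consmk4, consmk5, consmk6, vec, lmap_apply, Fin.sum_univ_seven, Matrix.cons_val_zero, Matrix.cons_val_one, Matrix.head_cons, cons7_2, cons7_3, cons7_4, cons7_5, cons7_6]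
        linear_combination (h1^2 - 1*t1^2) * hu4 + ((2:ℝ)*h1*t1) * hu5 + (h1^2*r - 1*r*t1^2) * hc1 + ((2:ℝ)*h1*r*t1) * hs1 + (h1^2*r + r + r*t1^2) * hh1
      · simp only [gB1, mkIso_coord, MB1, consmk0, consmk1, consmk2, consmk3, consmk4, consmk5, consmk6, vec, lmap_apply, Fin.sum_univ_seven, Matrix.cons_val_zero, Matrix.cons_val_one, Matrix.head_cons, cons7_2, cons7_3, cons7_4, cons7_5, cons7_6]
        linear_combination ((-2:ℝ)*h1*t1) * hu4 + (h1^2 - 1*t1^2) * hu5 + ((-2:ℝ)*h1*r*t1) * hc1 + (h1^2*r - 1*r*t1^2) * hs1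
      · simp only [gB1, mkIso_coord, MB1, consmk0, consmk1, consmk2, consmk3, consmk4, consmk5, consmk6, vec, lmap_apply, Fin.sum_univ_seven, Matrix.cons_val_zero, Matrix.cons_val_one, Matrix.head_cons, cons7_2, cons7_3, cons7_4, cons7_5, cons7_6]
        linear_combination ((u 6)) * hh1
    have e3 : gA h1 0 0 (-t1) hh1'' (vec ![h1*s, 0, 0, -1*s*t1, r, 0, (u 6)]) = vec ![s, 0, 0, 0, r, 0, (u 6)] := by
      ext i
      fin_cases i
      · simp only [gA, mkIso_coord, MA, consmk0, consmk1, consmk2, consmk3, consmk4, consmk5, consmk6, vec, lmap_apply, Fin.sum_univ_seven, Matrix.cons_val_zero, Matrix.cons_val_one, Matrix.head_cons, cons7_2, cons7_3, cons7_4, cons7_5, cons7_6]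
        linear_combination (s) * hh1
      · simp only [gA, mkIso_coord, MA, consmk0, consmk1, consmk2, consmk3, consmk4, consmk5, consmk6, vec, lmap_apply, Fin.sum_univ_seven, Matrix.cons_val_zero, Matrix.cons_val_one, Matrix.head_cons, cons7_2, cons7_3, cons7_4, cons7_5, cons7_6]
        ring
      · simp only [gA, mkIso_coord, MA, consmk0, consmk1, consmk2, consmk3, consmk4, consmk5, consmk6, vec, lmap_apply, Fin.sum_univ_seven, Matrix.cons_val_zero, Matrix.cons_val_one, Matrix.head_cons, cons7_2, cons7_3, cons7_4, cons7_5, cons7_6]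
        ring
      · simp only [gA, mkIso_coord, MA, consmk0, consmk1, consmk2, consmk3, consmk4, consmk5, consmk6, vec, lmap_apply, Fin.sum_univ_seven, Matrix.cons_val_zero, Matrix.cons_val_one, Matrix.head_cons, cons7_2, cons7_3, cons7_4, cons7_5, cons7_6]
        ring
      · simp only [gA, mkIso_coord, MA, consmk0, consmk1, consmk2, consmk3, consmk4, consmk5, consmk6, vec, lmap_apply, Fin.sum_univ_seven, Matrix.cons_val_zero, Matrix.cons_val_one, Matrix.head_cons, cons7_2, cons7_3, cons7_4, cons7_5, cons7_6]
        ring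
      · simp only [gA, mkIso_coord, MA, consmk0, consmk1, consmk2, consmk3, consmk4, consmk5, consmk6, vec, lmap_apply, Fin.sum_univ_seven, Matrix.cons_val_zero, Matrix.cons_val_one, Matrix.head_cons, cons7_2, cons7_3, cons7_4, cons7_5, cons7_6]
        ring
      · simp only [gA, mkIso_coord, MA, consmk0, consmk1, consmk2, consmk3, consmk4, consmk5, consmk6, vec, lmap_apply, Fin.sum_univ_seven, Matrix.cons_val_zero, Matrix.cons_val_one, Matrix.head_cons, cons7_2, cons7_3, cons7_4, cons7_5, cons7_6]
        ring
    have e4 : gB2 h2 t2 hh2 (vec ![s, 0, 0, 0, r, 0, (u 6)]) = vec ![h2*s, 0, s*t2, 0, R, 0, 0] := by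
      ext i
      fin_cases i
      · simp only [gB2, mkIso_coord, MB2, consmk0, consmk1, consmk2, consmk3, consmk4, consmk5, consmk6, vec, lmap_apply, Fin.sum_univ_seven, Matrix.cons_val_zero, Matrix.cons_val_one, Matrix.head_cons, cons7_2, cons7_3, cons7_4, cons7_5, cons7_6]
        ring
      · simp only [gB2, mkIso_coord, MB2, consmk0, consmk1, consmk2, consmk3, consmk4, consmk5, consmk6, vec, lmap_apply, Fin.sum_univ_seven, Matrix.cons_val_zero, Matrix.cons_val_one, Matrix.head_cons, cons7_2, cons7_3, cons7_4, cons7_5, cons7_6]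
        ring
      · simp only [gB2, mkIso_coord, MB2, consmk0, consmk1, consmk2, consmk3, consmk4, consmk5, consmk6, vec, lmap_apply, Fin.sum_univ_seven, Matrix.cons_val_zero, Matrix.cons_val_one, Matrix.head_cons, cons7_2, cons7_3, cons7_4, cons7_5, cons7_6]
        ring
      · simp only [gB2, mkIso_coord, MB2, consmk0, consmk1, consmk2, consmk3, consmk4, consmk5, consmk6, vec, lmap_apply, Fin.sum_univ_seven, Matrix.cons_val_zero, Matrix.cons_val_one, Matrix.head_cons, cons7_2, cons7_3, cons7_4, cons7_5, cons7_6]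
        ring
      · simp only [gB2, mkIso_coord, MB2, consmk0, consmk1, consmk2, consmk3, consmk4, consmk5, consmk6, vec, lmap_apply, Fin.sum_univ_seven, Matrix.cons_val_zero, Matrix.cons_val_one, Matrix.head_cons, cons7_2, cons7_3, cons7_4, cons7_5, cons7_6]
        linear_combination (h2^2 - 1*t2^2) * hr2 + ((2:ℝ)*h2*t2) * hu6 + (R*h2^2 - 1*R*t2^2) * hc2 + ((2:ℝ)*R*h2*t2) * hs2 + (R + R*h2^2 + R*t2^2) * hh2
      · simp only [gB2, mkIso_coord, MB2, consmk0, consmk1, consmk2, consmk3, consmk4, consmk5, consmk6, vec, lmap_apply, Fin.sum_univ_seven, Matrix.cons_val_zero, Matrix.cons_val_one, Matrix.head_cons, cons7_2, cons7_3, cons7_4, cons7_5, cons7_6]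
        ring
      · simp only [gB2, mkIso_coord, MB2, consmk0, consmk1, consmk2, consmk3, consmk4, consmk5, consmk6, vec, lmap_apply, Fin.sum_univ_seven, Matrix.cons_val_zero, Matrix.cons_val_one, Matrix.head_cons, cons7_2, cons7_3, cons7_4, cons7_5, cons7_6]
        linear_combination ((-2:ℝ)*h2*t2) * hr2 + (h2^2 - 1*t2^2) * hu6 + ((-2:ℝ)*R*h2*t2) * hc2 + (R*h2^2 - 1*R*t2^2) * hs2
    have e5 : gA h2 0 t2 0 hh2'' (vec ![h2*s, 0, s*t2, 0, R, 0, 0]) = vec ![s, 0, 0, 0, R, 0, 0] := by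
      ext i
      fin_cases i
      · simp only [gA, mkIso_coord, MA, consmk0, consmk1, consmk2, consmk3, consmk4, consmk5, consmk6, vec, lmap_apply, Fin.sum_univ_seven, Matrix.cons_val_zero, Matrix.cons_val_one, Matrix.head_cons, cons7_2, cons7_3, cons7_4, cons7_5, cons7_6]
        linear_combination (s) * hh2
      · simp only [gA, mkIso_coord, MA, consmk0, consmk1, consmk2, consmk3, consmk4, consmk5, consmk6, vec, lmap_apply, Fin.sum_univ_seven, Matrix.cons_val_zero, Matrix.cons_val_one, Matrix.head_cons, cons7_2, cons7_3, cons7_4, cons7_5, cons7_6]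
        ring
      · simp only [gA, mkIso_coord, MA, consmk0, consmk1, consmk2, consmk3, consmk4, consmk5, consmk6, vec, lmap_apply, Fin.sum_univ_seven, Matrix.cons_val_zero, Matrix.cons_val_one, Matrix.head_cons, cons7_2, cons7_3, cons7_4, cons7_5, cons7_6]
        ring
      · simp only [gA, mkIso_coord, MA, consmk0, consmk1, consmk2, consmk3, consmk4, consmk5, consmk6, vec, lmap_apply, Fin.sum_univ_seven, Matrix.cons_val_zero, Matrix.cons_val_one, Matrix.head_cons, cons7_2, cons7_3, cons7_4, cons7_5, cons7_6]
        ring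
      · simp only [gA, mkIso_coord, MA, consmk0, consmk1, consmk2, consmk3, consmk4, consmk5, consmk6, vec, lmap_apply, Fin.sum_univ_seven, Matrix.cons_val_zero, Matrix.cons_val_one, Matrix.head_cons, cons7_2, cons7_3, cons7_4, cons7_5, cons7_6]
        ring
      · simp only [gA, mkIso_coord, MA, consmk0, consmk1, consmk2, consmk3, consmk4, consmk5, consmk6, vec, lmap_apply, Fin.sum_univ_seven, Matrix.cons_val_zero, Matrix.cons_val_one, Matrix.head_cons, cons7_2, cons7_3, cons7_4, cons7_5, cons7_6]
        ring
      · simp only [gA, mkIso_coord, MA, consmk0, consmk1, consmk2, consmk3, consmk4, consmk5, consmk6, vec, lmap_apply, Fin.sum_univ_seven, Matrix.cons_val_zero, Matrix.cons_val_one, Matrix.head_cons, cons7_2, cons7_3, cons7_4, cons7_5, cons7_6]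
        ring
    have e6 : gB3 h3 (-t3) hh3' (vec ![s, 0, 0, 0, R, 0, 0]) = vec ![0, 0, 0, 0, (1:ℝ), 0, 0] := by
      ext i
      fin_cases i
      · simp only [gB3, mkIso_coord, MB3, consmk0, consmk1, consmk2, consmk3, consmk4, consmk5, consmk6, vec, lmap_apply, Fin.sum_univ_seven, Matrix.cons_val_zero, Matrix.cons_val_one, Matrix.head_cons, cons7_2, cons7_3, cons7_4, cons7_5, cons7_6]
        linear_combination ((-2:ℝ)*h3*t3) * hR3 + (h3^2 - 1*t3^2) * hs3
      · simp only [gB3, mkIso_coord, MB3, consmk0, consmk1, consmk2, consmk3, consmk4, consmk5, consmk6, vec, lmap_apply, Fin.sum_univ_seven, Matrix.cons_val_zero, Matrix.cons_val_one, Matrix.head_cons, cons7_2, cons7_3, cons7_4, cons7_5, cons7_6]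
        ring
      · simp only [gB3, mkIso_coord, MB3, consmk0, consmk1, consmk2, consmk3, consmk4, consmk5, consmk6, vec, lmap_apply, Fin.sum_univ_seven, Matrix.cons_val_zero, Matrix.cons_val_one, Matrix.head_cons, cons7_2, cons7_3, cons7_4, cons7_5, cons7_6]
        ring
      · simp only [gB3, mkIso_coord, MB3, consmk0, consmk1, consmk2, consmk3, consmk4, consmk5, consmk6, vec, lmap_apply, Fin.sum_univ_seven, Matrix.cons_val_zero, Matrix.cons_val_one, Matrix.head_cons, cons7_2, cons7_3, cons7_4, cons7_5, cons7_6]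
        ring
      · simp only [gB3, mkIso_coord, MB3, consmk0, consmk1, consmk2, consmk3, consmk4, consmk5, consmk6, vec, lmap_apply, Fin.sum_univ_seven, Matrix.cons_val_zero, Matrix.cons_val_one, Matrix.head_cons, cons7_2, cons7_3, cons7_4, cons7_5, cons7_6]
        linear_combination (h3^2 - 1*t3^2) * hR3 + ((2:ℝ)*h3*t3) * hs3 + ((1:ℝ) + h3^2 + t3^2) * hh3
      · simp only [gB3, mkIso_coord, MB3, consmk0, consmk1, consmk2, consmk3, consmk4, consmk5, consmk6, vec, lmap_apply, Fin.sum_univ_seven, Matrix.cons_val_zero, Matrix.cons_val_one, Matrix.head_cons, cons7_2, cons7_3, cons7_4, cons7_5, cons7_6]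
        ring
      · simp only [gB3, mkIso_coord, MB3, consmk0, consmk1, consmk2, consmk3, consmk4, consmk5, consmk6, vec, lmap_apply, Fin.sum_univ_seven, Matrix.cons_val_zero, Matrix.cons_val_one, Matrix.head_cons, cons7_2, cons7_3, cons7_4, cons7_5, cons7_6]
        ring
    rw [e1, e2, e3, e4, e5, e6]

theorem presSymm (g : E7 ≃ₗᵢ[ℝ] E7) (h : ∀ x y z, phi (g x) (g y) (g z) = phi x y z) :
    ∀ x y z, phi (g.symm x) (g.symm y) (g.symm z) = phi x y z := by
  intro x y z
  have := h (g.symm x) (g.symm y) (g.symm z)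
  simpa using this.symm

end G2Aux

open G2Aux in
/-- The stabilizer `G₂` of `φ` acts transitively on the unit sphere `S⁶`:
for any two unit vectors `u, u′` there is a linear isometry of `ℝ⁷`
preserving `φ` and carrying `u` to `u′`. -/
theorem G2_transitive_on_sphere (u u' : EuclideanSpace ℝ (Fin 7))
    (hu : ‖u‖ = 1) (hu' : ‖u'‖ = 1) :
    ∃ g : EuclideanSpace ℝ (Fin 7) ≃ₗᵢ[ℝ] EuclideanSpace ℝ (Fin 7),
      (∀ x y z, phi (g x) (g y) (g z) = phi x y z) ∧ g u = u' := by
  obtain ⟨g, hg, hgu⟩ := premain u hu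
  obtain ⟨g', hg', hgu'⟩ := premain u' hu'
  refine ⟨g.trans g'.symm, ?_, ?_⟩
  · intro x y z
    simp only [LinearIsometryEquiv.trans_apply]
    rw [presSymm g' hg', hg]
  · simp only [LinearIsometryEquiv.trans_apply]
    rw [hgu, ← hgu', LinearIsometryEquiv.symm_apply_apply]
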